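/- A nonzero submodule N of M is strongly 2-absorbing second if and only if for all ideals I, J of R and every submodule K of M with I•J•N ⊆ K, one has I•N ⊆ K or J•N ⊆ K or I•J ⊆ Ann_R(N). -/
import Mathlib


open Pointwise

/-- A proper submodule `L` is completely irreducible if whenever `L` is the
intersection of a family of submodules, it equals one of them. -/
def IsCompletelyIrreducible {R M : Type*} [CommRing R] [AddCommGroup M] [Module R M]
    (L : Submodule R M) : Prop :=
  L ≠ ⊤ ∧ ∀ S : Set (Submodule R M), L = sInf S → L ∈ S

/-- A nonzero submodule `N` is 2-absorbing second if whenever `a b : R`, `L` is a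
completely irreducible submodule, and `a • b • N ⊆ L`, then `a • N ⊆ L` or
`b • N ⊆ L` or `a * b ∈ Ann(N)`. -/
def Is2AbsorbingSecond {R M : Type*} [CommRing R] [AddCommGroup M] [Module R M]
    (N : Submodule R M) : Prop :=
  N ≠ ⊥ ∧ ∀ (a b : R) (L : Submodule R M), IsCompletelyIrreducible L →
    a • b • N ≤ L → a • N ≤ L ∨ b • N ≤ L ∨ a * b ∈ N.annihilator


/-- A nonzero submodule `N` is strongly 2-absorbing second if whenever `a b : R` and
`L₁, L₂` are completely irreducible submodules with `a • b • N ⊆ L₁ ∩ L₂`, then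
`a • N ⊆ L₁ ∩ L₂` or `b • N ⊆ L₁ ∩ L₂` or `a * b ∈ Ann(N)`. -/
def IsStrongly2AbsorbingSecond {R M : Type*} [CommRing R] [AddCommGroup M] [Module R M]
    (N : Submodule R M) : Prop :=
  N ≠ ⊥ ∧ ∀ (a b : R) (L₁ L₂ : Submodule R M), IsCompletelyIrreducible L₁ →
    IsCompletelyIrreducible L₂ → a • b • N ≤ L₁ ⊓ L₂ →
    a • N ≤ L₁ ⊓ L₂ ∨ b • N ≤ L₁ ⊓ L₂ ∨ a * b ∈ N.annihilator

section Aux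

variable {R M : Type*} [CommRing R] [AddCommGroup M] [Module R M]

lemma psmul_le_iff (a : R) (S K : Submodule R M) :
    a • S ≤ K ↔ ∀ n ∈ S, a • n ∈ K := by
  constructor
  · intro h n hn
    exact h (Submodule.smul_mem_pointwise_smul n a S hn)
  · intro h x hx
    rw [← SetLike.mem_coe, Submodule.coe_pointwise_smul] at hx
    obtain ⟨n, hn, rfl⟩ := hx
    exact h n hn

/-- Every submodule can be separated from an outside element by a completely
irreducible submodule (via Zorn's lemma). -/
lemma exists_CI (K : Submodule R M) (x : M) (hx : x ∉ K) :
    ∃ L : Submodule R M, IsCompletelyIrreducible L ∧ K ≤ L ∧ x ∉ L := by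
  set s : Set (Submodule R M) := {L | K ≤ L ∧ x ∉ L} with hs
  have hchain : ∀ c ⊆ s, IsChain (· ≤ ·) c → ∀ y ∈ c, ∃ ub ∈ s, ∀ z ∈ c, z ≤ ub := by
    intro c hcs hc y hy
    refine ⟨sSup c, ⟨?_, ?_⟩, fun z hz => le_sSup hz⟩
    · exact le_trans (hcs hy).1 (le_sSup hy)
    · intro hxs
      rw [Submodule.mem_sSup_of_directed ⟨y, hy⟩ hc.directedOn] at hxs
      obtain ⟨z, hz, hxz⟩ := hxs
      exact (hcs hz).2 hxz
  obtain ⟨m, hKm, hmax⟩ := zorn_le_nonempty₀ s hchain K ⟨le_rfl, hx⟩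
  refine ⟨m, ⟨?_, ?_⟩, hmax.prop.1, hmax.prop.2⟩
  · intro h
    exact hmax.prop.2 (h ▸ Submodule.mem_top)
  · intro S hS
    by_contra hmS
    apply hmax.prop.2
    rw [hS]
    rw [Submodule.mem_sInf]
    intro T hT
    have hmT : m ≤ T := hS ▸ sInf_le hT
    have hne : m ≠ T := fun h => hmS (h ▸ hT)
    by_contra hxT
    have : T ∈ s := ⟨le_trans hmax.prop.1 hmT, hxT⟩
    exact hne (le_antisymm hmT (hmax.le_of_ge this hmT))

lemma le_of_all_CI {c K : Submodule R M}
    (h : ∀ L : Submodule R M, IsCompletelyIrreducible L → K ≤ L → c ≤ L) : c ≤ K := by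
  intro x hx
  by_contra hxK
  obtain ⟨L, hL, hKL, hxL⟩ := exists_CI K x hxK
  exact hxL (h L hL hKL hx)

/-- Elementwise version of the ideal characterization. -/
lemma elem_version {N : Submodule R M} (hN : IsStrongly2AbsorbingSecond N)
    (a b : R) (K : Submodule R M) (h : a • b • N ≤ K) :
    a • N ≤ K ∨ b • N ≤ K ∨ a * b ∈ N.annihilator := by
  by_cases hab : a * b ∈ N.annihilator
  · exact Or.inr (Or.inr hab)
  by_cases haK : a • N ≤ K
  · exact Or.inl haK
  right; left
  -- obtain a CI submodule L₁ ⊇ K with a • N ⊄ L₁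
  obtain ⟨x, hxa, hxK⟩ := SetLike.not_le_iff_exists.mp haK
  obtain ⟨L₁, hL₁, hKL₁, hxL₁⟩ := exists_CI K x hxK
  apply le_of_all_CI
  intro L₂ hL₂ hKL₂
  have habL : a • b • N ≤ L₁ ⊓ L₂ := le_trans h (le_inf hKL₁ hKL₂)
  rcases hN.2 a b L₁ L₂ hL₁ hL₂ habL with h1 | h2 | h3
  · exact absurd (h1.trans inf_le_left hxa) hxL₁
  · exact h2.trans inf_le_right
  · exact absurd h3 hab

/-- Purely ideal-theoretic combinatorial lemma. -/
lemma two_absorbing_ideal_lemma {P A I J : Ideal R}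
    (h : ∀ a ∈ I, ∀ b ∈ J, a ∈ P ∨ b ∈ P ∨ a * b ∈ A) :
    I ≤ P ∨ J ≤ P ∨ I * J ≤ A := by
  by_cases hI : I ≤ P
  · exact Or.inl hI
  by_cases hJ : J ≤ P
  · exact Or.inr (Or.inl hJ)
  right; right
  obtain ⟨a₀, ha₀I, ha₀P⟩ := SetLike.not_le_iff_exists.mp hI
  obtain ⟨b₀, hb₀J, hb₀P⟩ := SetLike.not_le_iff_exists.mp hJ
  have ha₀b₀ : a₀ * b₀ ∈ A := by
    rcases h a₀ ha₀I b₀ hb₀J with h1 | h2 | h3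
    · exact absurd h1 ha₀P
    · exact absurd h2 hb₀P
    · exact h3
  rw [Ideal.mul_le]
  intro a haI b hbJ
  rcases h a haI b hbJ with haP | hbP | hab
  rotate_left 2
  · exact hab
  ·
    -- a ∈ P; then a + a₀ ∉ P
    have haa₀ : a + a₀ ∉ P := fun hc => ha₀P (by simpa using P.sub_mem hc haP)
    have hab₀ : a * b₀ ∈ A := by
      rcases h (a + a₀) (I.add_mem haI ha₀I) b₀ hb₀J with h1 | h2 | h3
      · exact absurd h1 haa₀
      · exact absurd h2 hb₀P
      · have := A.sub_mem h3 ha₀b₀; rwa [add_mul, add_sub_cancel_right] at this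
    by_cases hbP : b ∈ P
    · -- b ∈ P too; then b + b₀ ∉ P
      have hbb₀ : b + b₀ ∉ P := fun hc => hb₀P (by simpa using P.sub_mem hc hbP)
      have ha₀b : a₀ * b ∈ A := by
        rcases h a₀ ha₀I (b + b₀) (J.add_mem hbJ hb₀J) with h1 | h2 | h3
        · exact absurd h1 ha₀P
        · exact absurd h2 hbb₀
        · have := A.sub_mem h3 ha₀b₀; rwa [mul_add, add_sub_cancel_right] at this
      have hsum : (a + a₀) * (b + b₀) ∈ A := by
        rcases h (a + a₀) (I.add_mem haI ha₀I) (b + b₀) (J.add_mem hbJ hb₀J) with h1 | h2 | h3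
        · exact absurd h1 haa₀
        · exact absurd h2 hbb₀
        · exact h3
      have : a * b = (a + a₀) * (b + b₀) - a * b₀ - a₀ * b - a₀ * b₀ := by ring
      rw [this]
      exact A.sub_mem (A.sub_mem (A.sub_mem hsum hab₀) ha₀b) ha₀b₀
    · -- b ∉ P
      have ha₀b : a₀ * b ∈ A := by
        rcases h a₀ ha₀I b hbJ with h1 | h2 | h3
        · exact absurd h1 ha₀P
        · exact absurd h2 hbP
        · exact h3
      have hsum : (a + a₀) * b ∈ A := by
        rcases h (a + a₀) (I.add_mem haI ha₀I) b hbJ with h1 | h2 | h3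
        · exact absurd h1 haa₀
        · exact absurd h2 hbP
        · exact h3
      have := A.sub_mem hsum ha₀b
      rwa [add_mul, add_sub_cancel_right] at this
  ·
    -- b ∈ P; symmetric with a ∉ P or a ∈ P; handle directly
    by_cases haP : a ∈ P
    · -- both in P, same as subcase above with roles; redo
      have haa₀ : a + a₀ ∉ P := fun hc => ha₀P (by simpa using P.sub_mem hc haP)
      have hbb₀ : b + b₀ ∉ P := fun hc => hb₀P (by simpa using P.sub_mem hc hbP)
      have hab₀ : a * b₀ ∈ A := by
        rcases h (a + a₀) (I.add_mem haI ha₀I) b₀ hb₀J with h1 | h2 | h3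
        · exact absurd h1 haa₀
        · exact absurd h2 hb₀P
        · have := A.sub_mem h3 ha₀b₀; rwa [add_mul, add_sub_cancel_right] at this
      have ha₀b : a₀ * b ∈ A := by
        rcases h a₀ ha₀I (b + b₀) (J.add_mem hbJ hb₀J) with h1 | h2 | h3
        · exact absurd h1 ha₀P
        · exact absurd h2 hbb₀
        · have := A.sub_mem h3 ha₀b₀; rwa [mul_add, add_sub_cancel_right] at this
      have hsum : (a + a₀) * (b + b₀) ∈ A := by
        rcases h (a + a₀) (I.add_mem haI ha₀I) (b + b₀) (J.add_mem hbJ hb₀J) with h1 | h2 | h3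
        · exact absurd h1 haa₀
        · exact absurd h2 hbb₀
        · exact h3
      have : a * b = (a + a₀) * (b + b₀) - a * b₀ - a₀ * b - a₀ * b₀ := by ring
      rw [this]
      exact A.sub_mem (A.sub_mem (A.sub_mem hsum hab₀) ha₀b) ha₀b₀
    · -- a ∉ P, b ∈ P
      have hbb₀ : b + b₀ ∉ P := fun hc => hb₀P (by simpa using P.sub_mem hc hbP)
      have hab₀ : a * b₀ ∈ A := by
        rcases h a haI b₀ hb₀J with h1 | h2 | h3
        · exact absurd h1 haP
        · exact absurd h2 hb₀P
        · exact h3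
      have hsum : a * (b + b₀) ∈ A := by
        rcases h a haI (b + b₀) (J.add_mem hbJ hb₀J) with h1 | h2 | h3
        · exact absurd h1 haP
        · exact absurd h2 hbb₀
        · exact h3
      have := A.sub_mem hsum hab₀
      rwa [mul_add, add_sub_cancel_right] at this

end Aux

theorem strongly2AbsorbingSecond_iff_ideal
    {R M : Type*} [CommRing R] [AddCommGroup M] [Module R M]
    (N : Submodule R M) (hne : N ≠ ⊥) :
    IsStrongly2AbsorbingSecond N ↔
      ∀ (I J : Ideal R) (K : Submodule R M), I • J • N ≤ K →
        I • N ≤ K ∨ J • N ≤ K ∨ I * J ≤ N.annihilator := by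
  constructor
  · intro hN I J K hIJ
    -- colon ideal P = {c | c • N ≤ K}
    set P : Ideal R :=
      { carrier := {c | c • N ≤ K}
        add_mem' := by
          intro a b ha hb
          rw [Set.mem_setOf_eq, psmul_le_iff] at *
          intro n hn
          rw [add_smul]
          exact K.add_mem (ha n hn) (hb n hn)
        zero_mem' := by
          rw [Set.mem_setOf_eq, psmul_le_iff]
          intro n hn
          rw [zero_smul]; exact K.zero_mem
        smul_mem' := by
          intro c a ha
          rw [Set.mem_setOf_eq, psmul_le_iff] at *
          intro n hn
          rw [smul_eq_mul, mul_smul]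
          exact K.smul_mem c (ha n hn) } with hP
    have hmem : ∀ c : R, c ∈ P ↔ c • N ≤ K := fun c => Iff.rfl
    have key : ∀ a ∈ I, ∀ b ∈ J, a ∈ P ∨ b ∈ P ∨ a * b ∈ N.annihilator := by
      intro a haI b hbJ
      have habN : a • b • N ≤ K := by
        refine le_trans ?_ hIJ
        rw [psmul_le_iff]
        intro n hn
        rw [← SetLike.mem_coe, Submodule.coe_pointwise_smul] at hn
        obtain ⟨m, hm, rfl⟩ := hn
        exact Submodule.smul_mem_smul haI (Submodule.smul_mem_smul hbJ hm)
      exact elem_version hN a b K habN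
    rcases two_absorbing_ideal_lemma key with h1 | h2 | h3
    · left
      rw [Submodule.smul_le]
      intro r hr n hn
      exact (psmul_le_iff r N K).mp (h1 hr) n hn
    · right; left
      rw [Submodule.smul_le]
      intro r hr n hn
      exact (psmul_le_iff r N K).mp (h2 hr) n hn
    · exact Or.inr (Or.inr h3)
  · intro h
    refine ⟨hne, fun a b L₁ L₂ hL₁ hL₂ hab => ?_⟩
    have hIJ : Ideal.span {a} • Ideal.span {b} • N ≤ L₁ ⊓ L₂ := by
      rwa [Submodule.ideal_span_singleton_smul, Submodule.ideal_span_singleton_smul]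
    rcases h (Ideal.span {a}) (Ideal.span {b}) (L₁ ⊓ L₂) hIJ with h1 | h2 | h3
    · left
      rwa [Submodule.ideal_span_singleton_smul] at h1
    · right; left
      rwa [Submodule.ideal_span_singleton_smul] at h2
    · right; right
      have : a * b ∈ Ideal.span {a} * Ideal.span {b} := by
        rw [Ideal.span_singleton_mul_span_singleton]
        exact Ideal.mem_span_singleton_self _
      exact h3 this
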